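/- Let G be a finite soluble group, k a positive integer, π a set of primes, and suppose all δ_k*-commutators of G are π-elements. Then δ_k*(G) ≤ O_π(G). -/

import Mathlib

/-- The set of `δ_k*`-commutators of a group: every element is a
`δ_0*`-commutator; for `k ≥ 1`, an element is a `δ_k*`-commutator if it equals
`[a,b]` where `a` and `b` are powers of `δ_{k-1}*`-commutators and have
coprime orders. -/
def deltaStar (G : Type*) [Group G] : ℕ → Set G
  | 0 => Set.univ
  | k + 1 => {x : G | ∃ a b : G,
      (∃ c ∈ deltaStar G k, ∃ n : ℕ, a = c ^ n) ∧
      (∃ c ∈ deltaStar G k, ∃ n : ℕ, b = c ^ n) ∧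
      Nat.Coprime (orderOf a) (orderOf b) ∧
      x = a⁻¹ * b⁻¹ * a * b}

set_option linter.unusedVariables false
set_option linter.unusedSectionVars false



lemma one_mem_deltaStar (G : Type*) [Group G] (k : ℕ) : (1 : G) ∈ deltaStar G k := by
  cases k with
  | zero => trivial
  | succ k =>
    exact ⟨1, 1, ⟨1, one_mem_deltaStar G k, 1, (one_pow 1).symm⟩,
      ⟨1, one_mem_deltaStar G k, 1, (one_pow 1).symm⟩, by simp, by simp⟩

lemma deltaStar_map {G H : Type*} [Group G] [Group H] (f : G →* H) :
    ∀ k : ℕ, ∀ x ∈ deltaStar G k, f x ∈ deltaStar H k := by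
  intro k
  induction k with
  | zero => intro x _; trivial
  | succ k ih =>
    rintro x ⟨a, b, ⟨c, hc, n, rfl⟩, ⟨d, hd, m, rfl⟩, hcop, rfl⟩
    refine ⟨f (c ^ n), f (d ^ m), ⟨f c, ih _ hc, n, by simp⟩, ⟨f d, ih _ hd, m, by simp⟩,
      ?_, by simp⟩
    exact Nat.Coprime.coprime_dvd_left (orderOf_map_dvd f _)
      (Nat.Coprime.coprime_dvd_right (orderOf_map_dvd f _) hcop)

lemma deltaStar_succ_subset (G : Type*) [Group G] :
    ∀ k : ℕ, deltaStar G (k + 1) ⊆ deltaStar G k := by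
  intro k
  induction k with
  | zero => intro x _; trivial
  | succ k ih =>
    rintro x ⟨a, b, ⟨c, hc, n, rfl⟩, ⟨d, hd, m, rfl⟩, hcop, rfl⟩
    exact ⟨c ^ n, d ^ m, ⟨c, ih hc, n, rfl⟩, ⟨d, ih hd, m, rfl⟩, hcop, rfl⟩

lemma deltaStar_subset_of_le (G : Type*) [Group G] {j k : ℕ} (h : j ≤ k) :
    deltaStar G k ⊆ deltaStar G j := by
  induction h with
  | refl => exact fun x hx => hx
  | step h ih => exact fun x hx => ih (deltaStar_succ_subset G _ hx)


lemma coprime_of_primes {a b : ℕ} (h : ∀ q : ℕ, q.Prime → q ∣ a → q ∣ b → False) :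
    Nat.Coprime a b := by
  by_contra hc
  have hq := Nat.minFac_prime hc
  exact h _ hq ((Nat.minFac_dvd _).trans (Nat.gcd_dvd_left a b))
    ((Nat.minFac_dvd _).trans (Nat.gcd_dvd_right a b))

lemma exists_pow_good {G H : Type*} [Group G] [Group H] [Finite G] (f : G →* H) (a0 : G) :
    ∃ m : ℕ, f (a0 ^ m) = f a0 ∧
      ∀ q : ℕ, q.Prime → q ∣ orderOf (a0 ^ m) → q ∣ orderOf (f a0) := by
  classical
  set e := orderOf a0 with he
  set r := orderOf (f a0) with hr
  have he0 : 0 < e := orderOf_pos a0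
  have hre : r ∣ e := orderOf_map_dvd f a0
  set r' := Nat.gcd e (r ^ e) with hr'
  have hr'e : r' ∣ e := Nat.gcd_dvd_left _ _
  have hrr' : r ∣ r' := Nat.dvd_gcd hre (dvd_pow_self r he0.ne')
  have hr'0 : 0 < r' := Nat.pos_of_dvd_of_pos hr'e he0
  set t := e / r' with ht
  have het : e = r' * t := (Nat.mul_div_cancel' hr'e).symm
  have ht0 : 0 < t := Nat.div_pos (Nat.le_of_dvd he0 hr'e) hr'0
  have hr0 : 0 < r := Nat.pos_of_dvd_of_pos hre he0
  have hprimes_r' : ∀ q : ℕ, q.Prime → q ∣ r' → q ∣ r := by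
    intro q hq hqr'
    exact hq.dvd_of_dvd_pow (hqr'.trans (Nat.gcd_dvd_right _ _))
  have hcop : Nat.Coprime r' t := by
    apply coprime_of_primes
    intro q hq hq1 hq2
    have hqr : q ∣ r := hprimes_r' q hq hq1
    have hw : 1 ≤ r.factorization q := hq.factorization_pos_of_dvd hr0.ne' hqr
    have hv : e.factorization q ≤ e := (Nat.factorization_lt q he0.ne').le
    have hmin : r'.factorization q = e.factorization q := by
      rw [hr', Nat.factorization_gcd he0.ne' (pow_pos hr0 e).ne', Finsupp.inf_apply,
        Nat.factorization_pow]
      simp only [Finsupp.smul_apply, smul_eq_mul]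
      exact min_eq_left (hv.trans (Nat.le_mul_of_pos_right e hw))
    have htq : 1 ≤ t.factorization q := hq.factorization_pos_of_dvd ht0.ne' hq2
    rw [ht, Nat.factorization_div hr'e] at htq
    simp only [Finsupp.tsub_apply] at htq
    omega
  obtain ⟨m, hm1, hm0⟩ := Nat.chineseRemainder hcop 1 0
  refine ⟨m, ?_, ?_⟩
  · have : m ≡ 1 [MOD r] := Nat.ModEq.of_dvd hrr' hm1
    rw [map_pow]
    calc (f a0) ^ m = (f a0) ^ 1 := pow_eq_pow_iff_modEq.mpr (by rwa [← hr])
    _ = f a0 := pow_one _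
  · have htm : t ∣ m := (Nat.modEq_zero_iff_dvd).mp hm0
    have hgcd : Nat.gcd e m = t := by
      apply Nat.dvd_antisymm
      · have hcg : Nat.Coprime (Nat.gcd e m) r' := by
          apply coprime_of_primes
          intro q hq hq1 hq2
          have hqm : q ∣ m := hq1.trans (Nat.gcd_dvd_right _ _)
          have : m ≡ 1 [MOD q] := Nat.ModEq.of_dvd hq2 hm1
          have h0 : m ≡ 0 [MOD q] := (Nat.modEq_zero_iff_dvd).mpr hqm
          have : (0 : ℕ) ≡ 1 [MOD q] := h0.symm.trans this
          have := (Nat.modEq_iff_dvd' (by omega)).mp this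
          simp at this
          exact Nat.Prime.one_lt hq |>.ne' (by omega)
        have hge : Nat.gcd e m ∣ r' * t := het ▸ Nat.gcd_dvd_left e m
        exact (Nat.Coprime.dvd_of_dvd_mul_left hcg hge)
      · exact Nat.dvd_gcd (Nat.div_dvd_of_dvd hr'e) htm
    intro q hq hqd
    rw [orderOf_pow, ← he, hgcd] at hqd
    have : e / t = r' := by
      rw [het, Nat.mul_div_cancel _ ht0]
    rw [this] at hqd
    exact hprimes_r' q hq hqd

/-- The `π`-core `O_π(G)`: the largest normal `π`-subgroup of `G`. -/
def piCore (π : Set ℕ) (G : Type*) [Group G] : Subgroup G :=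
  sSup {H : Subgroup G | H.Normal ∧ ∀ x ∈ H, ∀ p : ℕ, p.Prime → p ∣ orderOf x → p ∈ π}


section PiCore

variable {G : Type*} [Group G] [Finite G] {π : Set ℕ}

/-- elements of a subgroup all of whose card's primes are in π -/
lemma pi_of_card {H : Subgroup G} (h : ∀ q : ℕ, q.Prime → q ∣ Nat.card H → q ∈ π)
    {x : G} (hx : x ∈ H) : ∀ p : ℕ, p.Prime → p ∣ orderOf x → p ∈ π := by
  intro p hp hpx
  refine h p hp ?_
  have : orderOf (⟨x, hx⟩ : H) = orderOf x := Subgroup.orderOf_mk x hx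
  exact this ▸ hpx |> fun hh => (this ▸ hpx : p ∣ orderOf (⟨x, hx⟩ : H)).trans
    (orderOf_dvd_natCard _)

/-- conversely, primes of the card come from element orders (Cauchy) -/
lemma card_pi_of_pi {H : Subgroup G}
    (h : ∀ x ∈ H, ∀ p : ℕ, p.Prime → p ∣ orderOf x → p ∈ π) :
    ∀ q : ℕ, q.Prime → q ∣ Nat.card H → q ∈ π := by
  intro q hq hqd
  haveI := Fact.mk hq
  obtain ⟨y, hy⟩ := exists_prime_orderOf_dvd_card' (G := H) q hqd
  refine h (y : G) y.2 q hq ?_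
  rw [Subgroup.orderOf_coe, hy]

lemma sup_pi {H K : Subgroup G} [K.Normal]
    (hH : ∀ x ∈ H, ∀ p : ℕ, p.Prime → p ∣ orderOf x → p ∈ π)
    (hK : ∀ x ∈ K, ∀ p : ℕ, p.Prime → p ∣ orderOf x → p ∈ π) :
    ∀ x ∈ H ⊔ K, ∀ p : ℕ, p.Prime → p ∣ orderOf x → p ∈ π := by
  have hcard : Nat.card ↥(H ⊔ K) ∣ Nat.card H * Nat.card K := by
    have h1 : Nat.card ↥(H ⊔ K) =
        Nat.card (↥(H ⊔ K) ⧸ K.subgroupOf (H ⊔ K)) * Nat.card (K.subgroupOf (H ⊔ K)) :=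
      Subgroup.card_eq_card_quotient_mul_card_subgroup _
    have h2 : Nat.card (↥(H ⊔ K) ⧸ K.subgroupOf (H ⊔ K)) = K.relIndex (H ⊔ K) := rfl
    have h3 : K.relIndex (H ⊔ K) = K.relIndex H := Subgroup.relIndex_sup_right H K
    have h4 : K.relIndex H ∣ Nat.card H := Subgroup.index_dvd_card (K.subgroupOf H)
    have h5 : Nat.card (K.subgroupOf (H ⊔ K)) = Nat.card K :=
      Nat.card_congr (Subgroup.subgroupOfEquivOfLe le_sup_right).toEquiv
    rw [h1, h2, h3, h5]
    exact mul_dvd_mul h4 dvd_rfl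
  intro x hx p hp hpx
  have hpcard : p ∣ Nat.card H * Nat.card K := dvd_trans (by
    have : orderOf (⟨x, hx⟩ : ↥(H ⊔ K)) = orderOf x := Subgroup.orderOf_mk x hx
    exact dvd_trans (this ▸ hpx) (orderOf_dvd_natCard _)) hcard
  rcases (Nat.Prime.dvd_mul hp).mp hpcard with h | h
  · exact card_pi_of_pi hH p hp h
  · exact card_pi_of_pi hK p hp h

lemma piCore_spec (π : Set ℕ) (G : Type*) [Group G] [Finite G] :
    (piCore π G).Normal ∧
      (∀ x ∈ piCore π G, ∀ p : ℕ, p.Prime → p ∣ orderOf x → p ∈ π) := by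
  haveI : Finite (Subgroup G) := Finite.of_injective _ SetLike.coe_injective
  set S := {H : Subgroup G | H.Normal ∧ ∀ x ∈ H, ∀ p : ℕ, p.Prime → p ∣ orderOf x → p ∈ π}
    with hS
  have hSne : S.Nonempty := by
    refine ⟨⊥, inferInstance, ?_⟩
    rintro x hx p hp hpx
    rw [Subgroup.mem_bot] at hx
    simp [hx] at hpx
    exact absurd hpx (Nat.Prime.one_lt hp).ne'
  obtain ⟨M, hMS, hMmax⟩ := Set.Finite.exists_maximalFor id S (Set.toFinite S) hSne
  have hjoin : ∀ H ∈ S, H ≤ M := by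
    intro H hHS
    haveI := hMS.1
    haveI := hHS.1
    have hup : H ⊔ M ∈ S := by
      constructor
      · exact Subgroup.sup_normal H M
      · exact sup_pi hHS.2 hMS.2
    have := hMmax hup (le_sup_right : M ≤ H ⊔ M)
    exact le_sup_left.trans this
  have hsup : piCore π G = M := by
    apply le_antisymm
    · exact sSup_le hjoin
    · exact le_sSup hMS
  rw [hsup]
  exact hMS

lemma le_piCore {H : Subgroup G} (h1 : H.Normal)
    (h2 : ∀ x ∈ H, ∀ p : ℕ, p.Prime → p ∣ orderOf x → p ∈ π) : H ≤ piCore π G :=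
  le_sSup ⟨h1, h2⟩

end PiCore

section MinNormal
variable {G : Type*} [Group G]


lemma eq_bot_of_commutator_eq_self [Group.IsSolvable G] {N : Subgroup G}
    (h : ⁅N, N⁆ = N) : N = ⊥ := by
  obtain ⟨n, hn⟩ := Group.IsSolvable.solvable (G := ↥N)
  have key : ∀ m : ℕ, Subgroup.map N.subtype (derivedSeries ↥N m) = N := by
    intro m
    induction m with
    | zero =>
      rw [derivedSeries_zero, ← MonoidHom.range_eq_map, Subgroup.range_subtype]
    | succ m ih =>
      rw [derivedSeries_succ, Subgroup.map_commutator, ih, h]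
  have := key n
  rw [hn] at this
  simpa using this.symm

lemma exists_minimal_normal_le [Finite G] {D : Subgroup G} (hD : D.Normal) (hne : D ≠ ⊥) :
    ∃ N : Subgroup G, N.Normal ∧ N ≤ D ∧ N ≠ ⊥ ∧
      ∀ N' : Subgroup G, N'.Normal → N' ≤ N → N' ≠ ⊥ → N' = N := by
  haveI : Finite (Subgroup G) := Finite.of_injective _ SetLike.coe_injective
  set S := {N : Subgroup G | N.Normal ∧ N ≤ D ∧ N ≠ ⊥} with hS
  obtain ⟨N, hNS, hNmin⟩ := Set.Finite.exists_minimalFor id S (Set.toFinite S)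
    ⟨D, hD, le_rfl, hne⟩
  refine ⟨N, hNS.1, hNS.2.1, hNS.2.2, ?_⟩
  intro N' h1 h2 h3
  have : N' ∈ S := ⟨h1, h2.trans hNS.2.1, h3⟩
  have h4 := hNmin this h2
  exact le_antisymm h2 h4

lemma minimal_normal_abelian [Finite G] [Group.IsSolvable G] {N : Subgroup G}
    (hN : N.Normal)
    (hmin : ∀ N' : Subgroup G, N'.Normal → N' ≤ N → N' ≠ ⊥ → N' = N) :
    ∀ a ∈ N, ∀ b ∈ N, a * b = b * a := by
  haveI := hN
  by_cases hbot : N = ⊥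
  · intro a ha b hb
    rw [hbot, Subgroup.mem_bot] at ha hb
    rw [ha, hb]
  have hle : ⁅N, N⁆ ≤ N := Subgroup.commutator_le_left N N
  by_cases hcomm : ⁅N, N⁆ = ⊥
  · intro a ha b hb
    open scoped commutatorElement in
    have h1 : ⁅a, b⁆ ∈ ⁅N, N⁆ := Subgroup.commutator_mem_commutator ha hb
    rw [hcomm, Subgroup.mem_bot] at h1
    exact (commutatorElement_eq_one_iff_mul_comm.mp h1)
  · exfalso
    have := hmin ⁅N, N⁆ (Subgroup.commutator_normal N N) hle hcomm
    exact hbot (eq_bot_of_commutator_eq_self this)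

lemma minimal_normal_exponent [Finite G] {N : Subgroup G} (hN : N.Normal) (hbot : N ≠ ⊥)
    (habel : ∀ a ∈ N, ∀ b ∈ N, a * b = b * a)
    (hmin : ∀ N' : Subgroup G, N'.Normal → N' ≤ N → N' ≠ ⊥ → N' = N) :
    ∃ p : ℕ, p.Prime ∧ ∀ x ∈ N, x ^ p = 1 := by
  have hcard : 1 < Nat.card N := (Subgroup.one_lt_card_iff_ne_bot N).mpr hbot
  set p := (Nat.card N).minFac with hp
  have hpp : p.Prime := Nat.minFac_prime (by omega)
  refine ⟨p, hpp, ?_⟩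
  haveI := Fact.mk hpp
  obtain ⟨y, hy⟩ := exists_prime_orderOf_dvd_card' (G := N) p (Nat.minFac_dvd _)
  set Np : Subgroup G :=
    { carrier := {x | x ∈ N ∧ x ^ p = 1}
      one_mem' := ⟨one_mem N, one_pow p⟩
      mul_mem' := by
        rintro a b ⟨haN, hap⟩ ⟨hbN, hbp⟩
        refine ⟨mul_mem haN hbN, ?_⟩
        rw [Commute.mul_pow (habel a haN b hbN), hap, hbp, one_mul]
      inv_mem' := by
        rintro a ⟨haN, hap⟩
        exact ⟨inv_mem haN, by rw [inv_pow, hap, inv_one]⟩ } with hNp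
  have hNpnormal : Np.Normal := by
    constructor
    rintro x ⟨hxN, hxp⟩ g
    refine ⟨hN.conj_mem x hxN g, ?_⟩
    have : (g * x * g⁻¹) ^ p = (MulAut.conj g x) ^ p := rfl
    rw [this, ← map_pow, hxp]
    simp
  have hNple : Np ≤ N := fun x hx => hx.1
  have hNpbot : Np ≠ ⊥ := by
    intro hcon
    have hyN : (y : G) ∈ Np := by
      refine ⟨y.2, ?_⟩
      have : (y : G) ^ p = ((y ^ p : N) : G) := rfl
      rw [this, ← hy, pow_orderOf_eq_one]
      rfl
    rw [hcon, Subgroup.mem_bot] at hyN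
    have : orderOf (y : G) = p := by rw [Subgroup.orderOf_coe, hy]
    rw [hyN] at this
    simp at this
    exact hpp.one_lt.ne' this.symm
  have := hmin Np hNpnormal hNple hNpbot
  intro x hx
  rw [← this] at hx
  exact hx.2

end MinNormal

section Central
variable {G : Type*} [Group G] [Finite G]

lemma central_claim {π : Set ℕ} {k : ℕ}
    (hπ : ∀ x ∈ deltaStar G k, ∀ p : ℕ, p.Prime → p ∣ orderOf x → p ∈ π)
    {N : Subgroup G} (hN : N.Normal)
    (habel : ∀ a ∈ N, ∀ b ∈ N, a * b = b * a)
    {p : ℕ} (hpp : p.Prime) (hNp : ∀ x ∈ N, x ^ p = 1) (hpπ : p ∉ π) :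
    ∀ x ∈ deltaStar G k, ∀ w ∈ N, x * w = w * x := by
  intro x hx
  by_contra hcon
  push_neg at hcon
  obtain ⟨n0, hn0N, hn0⟩ := hcon
  set m := orderOf x with hm
  have hmπ : ∀ q : ℕ, q.Prime → q ∣ m → q ∈ π := hπ x hx
  have hpm : ¬ p ∣ m := fun h => hpπ (hmπ p hpp h)
  have hconj : ∀ n ∈ N, x⁻¹ * n * x ∈ N := by
    intro n hn
    have := hN.conj_mem n hn x⁻¹
    simpa using this
  -- the map n ↦ n⁻¹ * (x⁻¹ * n * x) as a hom from N to G
  have hmulkey : ∀ a b : G, a ∈ N → b ∈ N →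
      ((a * b)⁻¹ * (x⁻¹ * (a * b) * x)) =
        (a⁻¹ * (x⁻¹ * a * x)) * (b⁻¹ * (x⁻¹ * b * x)) := by
    intro a b ha hb
    have h1 : (x⁻¹ * a * x) * b⁻¹ = b⁻¹ * (x⁻¹ * a * x) :=
      habel _ (hconj a ha) _ (N.inv_mem hb)
    have h2 : a⁻¹ * b⁻¹ = b⁻¹ * a⁻¹ := habel _ (N.inv_mem ha) _ (N.inv_mem hb)
    calc (a * b)⁻¹ * (x⁻¹ * (a * b) * x)
        = a⁻¹ * b⁻¹ * (x⁻¹ * (a * b) * x) := by rw [mul_inv_rev, h2]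
      _ = a⁻¹ * ((x⁻¹ * a * x) * b⁻¹) * (x⁻¹ * b * x) := by
          rw [h1]; group
      _ = (a⁻¹ * (x⁻¹ * a * x)) * (b⁻¹ * (x⁻¹ * b * x)) := by group
  let φ : ↥N →* G := MonoidHom.mk' (fun n : ↥N => (↑n)⁻¹ * (x⁻¹ * ↑n * x))
    (by intro a b; exact hmulkey _ _ a.2 b.2)
  set S : Subgroup G := φ.range with hS
  have hS_sub_N : ∀ s ∈ S, s ∈ N := by
    rintro s ⟨n, rfl⟩
    exact N.mul_mem (N.inv_mem n.2) (hconj _ n.2)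
  have hSne : S ≠ ⊥ := by
    intro hcb
    apply hn0
    have : φ ⟨n0, hn0N⟩ ∈ S := ⟨_, rfl⟩
    rw [hcb, Subgroup.mem_bot] at this
    have h2 : x⁻¹ * n0 * x = n0 := by
      have := mul_eq_one_iff_inv_eq.mp this
      simpa using this.symm
    have h3 := congrArg (fun z => x * z) h2
    simp only [mul_assoc, mul_inv_cancel_left] at h3
    exact h3.symm
  -- fixed points of conjugation by x on S are trivial
  have hfix : ∀ u, u ∈ S → x⁻¹ * u * x = u → u = 1 := by
    rintro u ⟨n, rfl⟩ hcomm
    set u := φ n with hu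
    have huN : u ∈ N := hS_sub_N u ⟨n, rfl⟩
    -- telescoping: u ^ m = 1
    have hconst : ∀ j : ℕ, (x ^ j)⁻¹ * u * x ^ j = u := by
      intro j
      induction j with
      | zero => simp
      | succ j ih2 =>
        rw [pow_succ, mul_inv_rev, show x⁻¹ * (x ^ j)⁻¹ * u * (x ^ j * x)
          = x⁻¹ * ((x ^ j)⁻¹ * u * x ^ j) * x by group, ih2, hcomm]
    have tele : ∀ j : ℕ, u ^ j = ((↑n)⁻¹ : G) * ((x ^ j)⁻¹ * ↑n * x ^ j) := by
      intro j
      induction j with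
      | zero => simp
      | succ j ih =>
        have expand : u = ((x ^ j)⁻¹ * ↑n * x ^ j)⁻¹ * ((x ^ (j+1))⁻¹ * ↑n * x ^ (j+1)) := by
          have : u = (x ^ j)⁻¹ * u * x ^ j := (hconst j).symm
          rw [this, hu]
          show (x ^ j)⁻¹ * ((↑n)⁻¹ * (x⁻¹ * ↑n * x)) * x ^ j = _
          rw [pow_succ]
          group
        calc u ^ (j + 1) = u ^ j * u := pow_succ u j
        _ = ((↑n)⁻¹ : G) * ((x ^ j)⁻¹ * ↑n * x ^ j) *
            (((x ^ j)⁻¹ * ↑n * x ^ j)⁻¹ * ((x ^ (j+1))⁻¹ * ↑n * x ^ (j+1))) := by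
            rw [← ih, ← expand]
        _ = ((↑n)⁻¹ : G) * ((x ^ (j+1))⁻¹ * ↑n * x ^ (j+1)) := by group
    have hum : u ^ m = 1 := by
      rw [tele m, hm, pow_orderOf_eq_one]
      group
    have hdm : orderOf u ∣ m := orderOf_dvd_of_pow_eq_one hum
    have hdp : orderOf u ∣ p := orderOf_dvd_of_pow_eq_one (hNp u huN)
    rcases (Nat.dvd_prime hpp).mp hdp with h1 | h1
    · exact orderOf_eq_one_iff.mp h1
    · exact absurd (h1 ▸ hdm) hpm
  -- conjugation-twisted map is surjective on S
  have hsurj : ∀ s ∈ S, ∃ t, t ∈ S ∧ t⁻¹ * (x⁻¹ * t * x) = s := by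
    have hmemF : ∀ t : ↥S, (↑t)⁻¹ * (x⁻¹ * ↑t * x) ∈ S := by
      intro t
      exact ⟨⟨↑t, hS_sub_N _ t.2⟩, rfl⟩
    set F : ↥S → ↥S := fun t => ⟨_, hmemF t⟩ with hF
    have hinj : Function.Injective F := by
      intro t1 t2 he
      have e : ((t1 : G))⁻¹ * (x⁻¹ * ↑t1 * x) = ((t2 : G))⁻¹ * (x⁻¹ * ↑t2 * x) :=
        congrArg Subtype.val he
      have e2 : x⁻¹ * (↑t1 * (↑t2)⁻¹) * x = ↑t1 * (↑t2)⁻¹ := by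
        have e3 : (x⁻¹ * ↑t1 * x) * (x⁻¹ * ↑t2 * x)⁻¹ = ↑t1 * (↑t2)⁻¹ := by
          have := congrArg (fun z : G => (↑t1 : G) * z * (x⁻¹ * ↑t2 * x)⁻¹ * ↑t2) e
          simp only [mul_assoc, inv_mul_cancel_left, mul_inv_cancel_left,
            inv_mul_cancel, mul_one] at this
          calc (x⁻¹ * ↑t1 * x) * (x⁻¹ * ↑t2 * x)⁻¹
              = (↑t1 : G) * ((↑t1)⁻¹ * (x⁻¹ * ↑t1 * x)) * (x⁻¹ * ↑t2 * x)⁻¹ := by group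
            _ = (↑t1 : G) * ((↑t2)⁻¹ * (x⁻¹ * ↑t2 * x)) * (x⁻¹ * ↑t2 * x)⁻¹ := by rw [e]
            _ = ↑t1 * (↑t2)⁻¹ := by group
        calc x⁻¹ * (↑t1 * (↑t2)⁻¹) * x = (x⁻¹ * ↑t1 * x) * (x⁻¹ * ↑t2 * x)⁻¹ := by group
        _ = ↑t1 * (↑t2)⁻¹ := e3
      have hu : (↑t1 : G) * (↑t2)⁻¹ ∈ S := S.mul_mem t1.2 (S.inv_mem t2.2)
      have := hfix _ hu e2
      have : (↑t1 : G) = ↑t2 := by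
        have h4 := mul_inv_eq_one.mp this
        exact h4
      exact Subtype.ext this
    have hsur : Function.Surjective F := (Finite.injective_iff_surjective).mp hinj
    intro s hs
    obtain ⟨t, ht⟩ := hsur ⟨s, hs⟩
    exact ⟨↑t, t.2, congrArg Subtype.val ht⟩
  -- every element of S is a delta_j commutator for all j ≤ k
  have inner : ∀ j : ℕ, j ≤ k → ∀ s ∈ S, s ∈ deltaStar G j := by
    intro j
    induction j with
    | zero => intro _ s _; trivial
    | succ j ihj =>
      intro hjk s hs
      obtain ⟨t, htS, hts⟩ := hsurj s hs
      have htN : t ∈ N := hS_sub_N t htS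
      have hcop : Nat.Coprime (orderOf t) (orderOf x) := by
        apply coprime_of_primes
        intro q hq hq1 hq2
        have : q ∣ p := hq1.trans (orderOf_dvd_of_pow_eq_one (hNp t htN))
        have hqp : q = p := (Nat.prime_dvd_prime_iff_eq hq hpp).mp this
        exact hpπ (hqp ▸ hmπ q hq hq2)
      refine ⟨t, x, ⟨t, ihj (Nat.le_of_succ_le hjk) t htS, 1, (pow_one t).symm⟩,
        ⟨x, deltaStar_subset_of_le G (Nat.le_of_succ_le hjk) hx, 1, (pow_one x).symm⟩,
        hcop, ?_⟩
      rw [← hts]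
      group
  obtain ⟨s, hsS, hs1⟩ : ∃ s ∈ S, s ≠ 1 := by
    by_contra h
    push_neg at h
    exact hSne ((Subgroup.eq_bot_iff_forall S).mpr h)
  have hsk : s ∈ deltaStar G k := inner k le_rfl s hsS
  have hos : orderOf s ∣ p := orderOf_dvd_of_pow_eq_one (hNp s (hS_sub_N s hsS))
  rcases (Nat.dvd_prime hpp).mp hos with h1 | h1
  · exact hs1 (orderOf_eq_one_iff.mp h1)
  · exact hpπ (hπ s hsk p hpp (h1 ▸ dvd_rfl))

end Central

section Lift

lemma deltaStar_lift {G H : Type*} [Group G] [Group H] [Finite G] (f : G →* H)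
    (hf : Function.Surjective f) :
    ∀ k : ℕ, ∀ x ∈ deltaStar H k, ∃ y ∈ deltaStar G k, f y = x := by
  intro k
  induction k with
  | zero =>
    intro x _
    obtain ⟨y, rfl⟩ := hf x
    exact ⟨y, trivial, rfl⟩
  | succ k ih =>
    rintro x ⟨a, b, ⟨c, hc, n, rfl⟩, ⟨d, hd, n', rfl⟩, hcop, rfl⟩
    obtain ⟨cg, hcg, rfl⟩ := ih c hc
    obtain ⟨dg, hdg, rfl⟩ := ih d hd
    obtain ⟨ma, hma1, hma2⟩ := exists_pow_good f (cg ^ n)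
    obtain ⟨mb, hmb1, hmb2⟩ := exists_pow_good f (dg ^ n')
    refine ⟨((cg ^ n) ^ ma)⁻¹ * ((dg ^ n') ^ mb)⁻¹ * (cg ^ n) ^ ma * (dg ^ n') ^ mb,
      ⟨(cg ^ n) ^ ma, (dg ^ n') ^ mb,
        ⟨cg, hcg, n * ma, (pow_mul cg n ma).symm⟩,
        ⟨dg, hdg, n' * mb, (pow_mul dg n' mb).symm⟩, ?_, rfl⟩, ?_⟩
    · apply coprime_of_primes
      intro q hq h1 h2
      have k1 : q ∣ orderOf (f (cg ^ n)) := hma2 q hq h1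
      have k2 : q ∣ orderOf (f (dg ^ n')) := hmb2 q hq h2
      rw [map_pow] at k1 k2
      have hq1 : q ∣ 1 := hcop ▸ Nat.dvd_gcd k1 k2
      exact hq.ne_one (Nat.dvd_one.mp hq1)
    · rw [map_mul, map_mul, map_mul, map_inv, map_inv, hma1, hmb1, map_pow, map_pow]

lemma closure_deltaStar_normal (G : Type*) [Group G] (k : ℕ) :
    (Subgroup.closure (deltaStar G k)).Normal := by
  constructor
  intro n hn g
  have h1 : (MulAut.conj g).toMonoidHom n ∈
      (Subgroup.closure (deltaStar G k)).map (MulAut.conj g).toMonoidHom :=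
    Subgroup.mem_map_of_mem _ hn
  rw [MonoidHom.map_closure] at h1
  have h2 : (MulAut.conj g).toMonoidHom '' deltaStar G k ⊆ deltaStar G k := by
    rintro y ⟨z, hz, rfl⟩
    exact deltaStar_map _ k z hz
  have h3 := Subgroup.closure_mono h2 h1
  simpa using h3

end Lift

universe u

theorem main_aux : ∀ (n : ℕ) (G : Type u) [Group G] [Finite G], Nat.card G ≤ n →
    ∀ (_ : IsSolvable G) (k : ℕ) (π : Set ℕ),
    (∀ x ∈ deltaStar G k, ∀ p : ℕ, p.Prime → p ∣ orderOf x → p ∈ π) →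
    Subgroup.closure (deltaStar G k) ≤ piCore π G := by
  intro n
  induction n with
  | zero =>
    intro G _ _ hcard _ k π hπ
    have : 0 < Nat.card G := Nat.card_pos
    omega
  | succ n ih =>
    intro G _ _ hcard hsol k π hπ
    haveI : Group.IsSolvable G := hsol
    by_cases hP : piCore π G = ⊥
    case neg =>
      obtain ⟨hPn, hPpi⟩ := piCore_spec π G
      haveI := hPn
      have hcardQ : Nat.card (G ⧸ piCore π G) ≤ n := by
        have h1 : Nat.card G = Nat.card (G ⧸ piCore π G) * Nat.card (piCore π G) :=
          Subgroup.card_eq_card_quotient_mul_card_subgroup _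
        have h2 : 1 < Nat.card (piCore π G) := (Subgroup.one_lt_card_iff_ne_bot _).mpr hP
        have h3 : 0 < Nat.card (G ⧸ piCore π G) := Nat.card_pos
        have h4 : Nat.card (G ⧸ piCore π G) * 2 ≤
            Nat.card (G ⧸ piCore π G) * Nat.card (piCore π G) :=
          Nat.mul_le_mul_left _ h2
        omega
      have hπQ : ∀ x ∈ deltaStar (G ⧸ piCore π G) k, ∀ q : ℕ, q.Prime → q ∣ orderOf x → q ∈ π := by
        intro x hx q hq hqd
        obtain ⟨y, hy, rfl⟩ := deltaStar_lift (QuotientGroup.mk' _)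
          (QuotientGroup.mk'_surjective _) k x hx
        exact hπ y hy q hq (hqd.trans (orderOf_map_dvd _ _))
      have hQle := ih (G ⧸ piCore π G) hcardQ (inferInstance : Group.IsSolvable _) k π hπQ
      set M := Subgroup.comap (QuotientGroup.mk' (piCore π G)) (piCore π (G ⧸ piCore π G))
        with hM
      have hMn : M.Normal := (piCore_spec π (G ⧸ piCore π G)).1.comap _
      have hMpi : ∀ x ∈ M, ∀ q : ℕ, q.Prime → q ∣ orderOf x → q ∈ π := by
        intro x hxM q hq hqd
        have hx1 : (QuotientGroup.mk' (piCore π G)) x ∈ piCore π (G ⧸ piCore π G) := hxM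
        have hdpi := (piCore_spec π (G ⧸ piCore π G)).2 _ hx1
        have hxd : x ^ orderOf ((QuotientGroup.mk' (piCore π G)) x) ∈ piCore π G := by
          have h5 : (QuotientGroup.mk' (piCore π G))
              (x ^ orderOf ((QuotientGroup.mk' (piCore π G)) x)) = 1 := by
            rw [map_pow]; exact pow_orderOf_eq_one _
          have h6 := (QuotientGroup.eq_one_iff _).mp h5
          exact h6
        have h2 := hPpi _ hxd
        have hdvd : orderOf x ∣ orderOf ((QuotientGroup.mk' (piCore π G)) x) *
            orderOf (x ^ orderOf ((QuotientGroup.mk' (piCore π G)) x)) := by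
          apply orderOf_dvd_of_pow_eq_one
          rw [pow_mul]
          exact pow_orderOf_eq_one _
        rcases (Nat.Prime.dvd_mul hq).mp (hqd.trans hdvd) with h | h
        · exact hdpi q hq h
        · exact h2 q hq h
      have hle : Subgroup.closure (deltaStar G k) ≤ M := by
        rw [Subgroup.closure_le]
        intro x hx
        exact hQle (Subgroup.subset_closure (deltaStar_map (QuotientGroup.mk' _) k x hx))
      exact hle.trans (le_piCore hMn hMpi)
    case pos =>
      by_cases hD : Subgroup.closure (deltaStar G k) = ⊥
      · rw [hD]; exact bot_le
      exfalso
      have hDn := closure_deltaStar_normal G k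
      obtain ⟨N, hNn, hND, hNbot, hNmin⟩ := exists_minimal_normal_le hDn hD
      haveI := hNn
      have habel := minimal_normal_abelian hNn hNmin
      obtain ⟨p, hpp, hNp⟩ := minimal_normal_exponent hNn hNbot habel hNmin
      have hNpi : ∀ x ∈ N, orderOf x ∣ p := fun x hx =>
        orderOf_dvd_of_pow_eq_one (hNp x hx)
      have hpπ : p ∉ π := by
        intro hpin
        apply hNbot
        have hle : N ≤ piCore π G := le_piCore hNn (by
          intro x hxN q hq hqd
          have hq2 : q ∣ p := hqd.trans (hNpi x hxN)
          rw [(Nat.prime_dvd_prime_iff_eq hq hpp).mp hq2]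
          exact hpin)
        rw [hP, le_bot_iff] at hle
        exact hle
      have hcardQ : Nat.card (G ⧸ N) ≤ n := by
        have h1 : Nat.card G = Nat.card (G ⧸ N) * Nat.card N :=
          Subgroup.card_eq_card_quotient_mul_card_subgroup _
        have h2 : 1 < Nat.card N := (Subgroup.one_lt_card_iff_ne_bot _).mpr hNbot
        have h3 : 0 < Nat.card (G ⧸ N) := Nat.card_pos
        have h4 : Nat.card (G ⧸ N) * 2 ≤ Nat.card (G ⧸ N) * Nat.card N :=
          Nat.mul_le_mul_left _ h2
        omega
      have hπQ : ∀ x ∈ deltaStar (G ⧸ N) k, ∀ q : ℕ, q.Prime → q ∣ orderOf x → q ∈ π := by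
        intro x hx q hq hqd
        obtain ⟨y, hy, rfl⟩ := deltaStar_lift (QuotientGroup.mk' _)
          (QuotientGroup.mk'_surjective _) k x hx
        exact hπ y hy q hq (hqd.trans (orderOf_map_dvd _ _))
      have hQle := ih (G ⧸ N) hcardQ (inferInstance : Group.IsSolvable _) k π hπQ
      have hDπ : ∀ d ∈ Subgroup.closure (deltaStar G k), ∀ q : ℕ, q.Prime →
          q ∣ orderOf ((QuotientGroup.mk' N) d) → q ∈ π := by
        intro d hd q hq hqd
        have h2 : (QuotientGroup.mk' N) d ∈
            (Subgroup.closure (deltaStar G k)).map (QuotientGroup.mk' N) :=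
          Subgroup.mem_map_of_mem _ hd
        rw [MonoidHom.map_closure] at h2
        have h3 : (QuotientGroup.mk' N) d ∈ Subgroup.closure (deltaStar (G ⧸ N) k) := by
          refine Subgroup.closure_mono ?_ h2
          rintro y ⟨z, hz, rfl⟩
          exact deltaStar_map _ k z hz
        exact (piCore_spec π (G ⧸ N)).2 _ (hQle h3) q hq hqd
      have hcent := central_claim hπ hNn habel hpp hNp hpπ
      -- Schur–Zassenhaus step within D
      set D := Subgroup.closure (deltaStar G k) with hDdef
      have hDcent : ∀ d ∈ D, ∀ w ∈ N, d * w = w * d := by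
        have hle : D ≤ Subgroup.centralizer (N : Set G) := by
          rw [hDdef, Subgroup.closure_le]
          intro x hx
          rw [SetLike.mem_coe, Subgroup.mem_centralizer_iff]
          intro w hw
          exact (hcent x hx w hw).symm
        intro d hd w hw
        exact ((Subgroup.mem_centralizer_iff.mp (hle hd)) w hw).symm
      set N' : Subgroup ↥D := N.subgroupOf D with hN'def
      haveI hN'n : N'.Normal := hNn.subgroupOf D
      -- coprimality
      have hcardN : ∀ q : ℕ, q.Prime → q ∣ Nat.card N' → q = p := by
        intro q hq hqd
        have hc : Nat.card N' = Nat.card N :=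
          Nat.card_congr (Subgroup.subgroupOfEquivOfLe hND).toEquiv
        rw [hc] at hqd
        haveI := Fact.mk hq
        obtain ⟨y, hy⟩ := exists_prime_orderOf_dvd_card' (G := N) q hqd
        have h5 : orderOf (y : G) = q := by rw [Subgroup.orderOf_coe, hy]
        have h6 : q ∣ p := h5 ▸ hNpi _ y.2
        exact (Nat.prime_dvd_prime_iff_eq hq hpp).mp h6
      have hindexπ : ∀ q : ℕ, q.Prime → q ∣ N'.index → q ∈ π := by
        intro q hq hqd
        set χ : ↥D →* G ⧸ N := (QuotientGroup.mk' N).comp D.subtype with hχ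
        have hker : χ.ker = N' := by
          ext d
          simp only [hχ, MonoidHom.mem_ker, MonoidHom.comp_apply, Subgroup.coe_subtype,
            QuotientGroup.mk'_apply, QuotientGroup.eq_one_iff, hN'def,
            Subgroup.mem_subgroupOf]
        haveI := Fact.mk hq
        obtain ⟨ξ, hξ⟩ := exists_prime_orderOf_dvd_card' (G := ↥D ⧸ N') q hqd
        set e : (↥D ⧸ N') ≃* χ.range :=
          (QuotientGroup.quotientMulEquivOfEq hker.symm).trans
            (QuotientGroup.quotientKerEquivRange χ)
        have h5 : orderOf (e ξ) = q := by rw [e.orderOf_eq, hξ]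
        have h6 : orderOf ((e ξ : χ.range) : G ⧸ N) = q := by
          rw [Subgroup.orderOf_coe, h5]
        obtain ⟨d, hd⟩ := (e ξ).2
        refine hDπ (↑d : G) d.2 q hq ?_
        have h7 : (QuotientGroup.mk' N) (↑d : G) = ((e ξ : χ.range) : G ⧸ N) := hd
        rw [h7, h6]
      have hcop : Nat.Coprime (Nat.card N') N'.index := by
        apply coprime_of_primes
        intro q hq h1 h2
        have := hcardN q hq h1
        subst this
        exact hpπ (hindexπ q hq h2)
      obtain ⟨K, hK⟩ := Subgroup.exists_right_complement'_of_coprime hcop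
      -- every deltaStar element lies in K
      have hXK : ∀ x (hx : x ∈ deltaStar G k),
          (⟨x, Subgroup.subset_closure hx⟩ : ↥D) ∈ K := by
        intro x hx
        set ξ : ↥D := ⟨x, Subgroup.subset_closure hx⟩ with hξdef
        obtain ⟨⟨nn, kk⟩, hprod, -⟩ := hK.existsUnique ξ
        have hcommute : Commute ((nn : ↥D)) ((kk : ↥D)) := by
          have h8 : ((nn : ↥D) : G) ∈ N := Subgroup.mem_subgroupOf.mp nn.2
          apply Subtype.ext
          push_cast
          exact (hDcent _ (kk : ↥D).2 _ h8).symm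
        have hm : orderOf ξ = orderOf x := Subgroup.orderOf_mk x _
        have hpm : ¬ p ∣ orderOf x := fun h => hpπ (hπ x hx p hpp h)
        have hξm : ((nn : ↥D)) ^ orderOf x * ((kk : ↥D)) ^ orderOf x = 1 := by
          rw [← hcommute.mul_pow, hprod, ← hm, pow_orderOf_eq_one]
        have hnnK : ((nn : ↥D)) ^ orderOf x ∈ K := by
          have : ((nn : ↥D)) ^ orderOf x = (((kk : ↥D)) ^ orderOf x)⁻¹ :=
            eq_inv_of_mul_eq_one_left hξm
          rw [this]
          exact K.inv_mem (K.pow_mem kk.2 _)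
        have hnn1 : ((nn : ↥D)) ^ orderOf x = 1 :=
          Subgroup.disjoint_def.mp hK.disjoint (N'.pow_mem nn.2 _) hnnK
        have hnnp : ((nn : ↥D)) ^ p = 1 := by
          have h8 : ((nn : ↥D) : G) ∈ N := Subgroup.mem_subgroupOf.mp nn.2
          apply Subtype.ext
          push_cast
          exact hNp _ h8
        have hord : orderOf ((nn : ↥D)) = 1 := by
          have d1 : orderOf ((nn : ↥D)) ∣ orderOf x := orderOf_dvd_of_pow_eq_one hnn1
          have d2 : orderOf ((nn : ↥D)) ∣ p := orderOf_dvd_of_pow_eq_one hnnp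
          rcases (Nat.dvd_prime hpp).mp d2 with h | h
          · exact h
          · exact absurd (h ▸ d1) hpm
        have : (nn : ↥D) = 1 := orderOf_eq_one_iff.mp hord
        rw [← hprod, this, one_mul]
        exact kk.2
      -- hence all of D lies in K
      have hDK : ∀ g (hg : g ∈ D), (⟨g, hg⟩ : ↥D) ∈ K := by
        intro g hg
        induction hg using Subgroup.closure_induction with
        | mem x hx => exact hXK x hx
        | one => exact K.one_mem
        | mul x y hx hy hpx hpy => exact K.mul_mem hpx hpy
        | inv x hx hpx => exact K.inv_mem hpx
      apply hNbot
      rw [Subgroup.eq_bot_iff_forall]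
      intro w hw
      have hwD : w ∈ D := hND hw
      have h1 : (⟨w, hwD⟩ : ↥D) ∈ K := hDK w hwD
      have h2 : (⟨w, hwD⟩ : ↥D) ∈ N' := Subgroup.mem_subgroupOf.mpr hw
      have h3 : (⟨w, hwD⟩ : ↥D) = 1 := Subgroup.disjoint_def.mp hK.disjoint h2 h1
      exact congrArg Subtype.val h3

/-- If `G` is a finite soluble group all of whose `δ_k*`-commutators are
`π`-elements, then `δ_k*(G) ≤ O_π(G)`. -/
theorem deltaStar_le_piCore_of_solvable (G : Type*) [Group G] [Finite G]
    (hsol : IsSolvable G) (k : ℕ) (hk : 1 ≤ k) (π : Set ℕ)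
    (hπ : ∀ x ∈ deltaStar G k, ∀ p : ℕ, p.Prime → p ∣ orderOf x → p ∈ π) :
    Subgroup.closure (deltaStar G k) ≤ piCore π G :=
  main_aux (Nat.card G) G le_rfl hsol k π hπ
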